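/- For any positive integer k, Σ_{m=⌊k/2⌋+1}^{k} (2m+1) · C(2k+2, 2m+1) = (k+1) · (2^{2k} - (-1)^k · C(2k, k)). -/

import Mathlib

open Finset

lemma sum_range_two_mul (f : ℕ → ℤ) (n : ℕ) :
    ∑ i ∈ range (2 * n), f i = ∑ i ∈ range n, (f (2 * i) + f (2 * i + 1)) := by
  induction n with
  | zero => simp
  | succ n ih =>
      have : 2 * (n + 1) = (2 * n + 1) + 1 := by ring
      rw [this, Finset.sum_range_succ, Finset.sum_range_succ, ih, Finset.sum_range_succ]
      ring

lemma alt_partial (n k : ℕ) :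
    ∑ j ∈ range (k + 1), (-1 : ℤ) ^ j * ((n + 1).choose j : ℤ) = (-1) ^ k * (n.choose k : ℤ) := by
  induction k with
  | zero => simp
  | succ k ih =>
      rw [Finset.sum_range_succ, ih, Nat.choose_succ_succ]
      push_cast
      ring

lemma even_sum_full (k : ℕ) :
    ∑ m ∈ range (k + 1), ((2 * k + 1).choose (2 * m) : ℤ) = 2 ^ (2 * k) := by
  have hfull : ∑ j ∈ range (2 * (k + 1)), ((2 * k + 1).choose j : ℤ) = 2 ^ (2 * k + 1) := by
    have := Nat.sum_range_choose (2 * k + 1)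
    have h2 : 2 * (k + 1) = (2 * k + 1) + 1 := by ring
    rw [h2]
    exact_mod_cast congrArg (Nat.cast : ℕ → ℤ) this
  have halt : ∑ j ∈ range (2 * (k + 1)), (-1 : ℤ) ^ j * ((2 * k + 1).choose j : ℤ) = 0 := by
    have h2 : 2 * (k + 1) = (2 * k + 1) + 1 := by ring
    rw [h2, Int.alternating_sum_range_choose]
    simp
  rw [sum_range_two_mul] at hfull
  rw [sum_range_two_mul] at halt
  have halt' : ∑ i ∈ range (k + 1),
      (((2 * k + 1).choose (2 * i) : ℤ) - ((2 * k + 1).choose (2 * i + 1) : ℤ)) = 0 := by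
    rw [← halt]
    apply Finset.sum_congr rfl
    intro i _
    have : (-1 : ℤ) ^ (2 * i) = 1 := by
      rw [pow_mul]; norm_num
    rw [pow_succ, this]
    ring
  have h2 : (2 : ℤ) * ∑ m ∈ range (k + 1), ((2 * k + 1).choose (2 * m) : ℤ)
      = 2 ^ (2 * k + 1) := by
    calc (2 : ℤ) * ∑ m ∈ range (k + 1), ((2 * k + 1).choose (2 * m) : ℤ)
        = ∑ i ∈ range (k + 1),
            (((2 * k + 1).choose (2 * i) : ℤ) + ((2 * k + 1).choose (2 * i + 1) : ℤ))
          + ∑ i ∈ range (k + 1),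
            (((2 * k + 1).choose (2 * i) : ℤ) - ((2 * k + 1).choose (2 * i + 1) : ℤ)) := by
          rw [← Finset.sum_add_distrib, Finset.mul_sum]
          apply Finset.sum_congr rfl
          intro i _
          ring
      _ = 2 ^ (2 * k + 1) := by rw [hfull, halt']; ring
  have : (2 : ℤ) ^ (2 * k + 1) = 2 * 2 ^ (2 * k) := by ring
  linarith [h2]

lemma half_sum (k : ℕ) :
    2 * ∑ m ∈ range (k / 2 + 1), ((2 * k + 1).choose (2 * m) : ℤ)
      = 2 ^ (2 * k) + (-1) ^ k * ((2 * k).choose k : ℤ) := by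
  have hhalf : ∑ j ∈ range (k + 1), ((2 * k + 1).choose j : ℤ) = 2 ^ (2 * k) := by
    have := Nat.sum_range_choose_halfway k
    have h4 : (4 : ℤ) ^ k = 2 ^ (2 * k) := by rw [pow_mul]; norm_num
    rw [← h4]
    exact_mod_cast congrArg (Nat.cast : ℕ → ℤ) this
  have halt : ∑ j ∈ range (k + 1), (-1 : ℤ) ^ j * ((2 * k + 1).choose j : ℤ)
      = (-1) ^ k * ((2 * k).choose k : ℤ) := alt_partial (2 * k) k
  have key : ∑ j ∈ range (k + 1), ((1 + (-1 : ℤ) ^ j) * ((2 * k + 1).choose j : ℤ))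
      = 2 ^ (2 * k) + (-1) ^ k * ((2 * k).choose k : ℤ) := by
    rw [← hhalf, ← halt, ← Finset.sum_add_distrib]
    apply Finset.sum_congr rfl
    intro j _
    ring
  rw [← key]
  rcases Nat.even_or_odd k with ⟨t, ht⟩ | ⟨t, ht⟩
  · -- k = 2t
    subst ht
    have hdiv : (t + t) / 2 = t := by omega
    rw [hdiv]
    have h2 : t + t + 1 = 2 * t + 1 := by ring
    rw [h2, Finset.sum_range_succ, Finset.sum_range_succ, sum_range_two_mul]
    have he : ∀ i : ℕ, (1 + (-1 : ℤ) ^ (2 * i)) = 2 := by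
      intro i; rw [pow_mul]; norm_num
    have ho : ∀ i : ℕ, (1 + (-1 : ℤ) ^ (2 * i + 1)) = 0 := by
      intro i; rw [pow_succ, pow_mul]; norm_num
    rw [Finset.sum_congr rfl (fun i _ => by rw [he i, ho i]; ring :
      ∀ i ∈ range t, (1 + (-1:ℤ)^(2*i)) * ((2*(t+t)+1).choose (2*i) : ℤ)
        + (1 + (-1:ℤ)^(2*i+1)) * ((2*(t+t)+1).choose (2*i+1) : ℤ)
        = 2 * ((2*(t+t)+1).choose (2*i) : ℤ))]
    rw [he t, mul_add, Finset.mul_sum]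
  · -- k = 2t+1
    subst ht
    have hdiv : (2 * t + 1) / 2 = t := by omega
    rw [hdiv]
    have h2 : 2 * t + 1 + 1 = 2 * (t + 1) := by ring
    rw [h2, sum_range_two_mul, Finset.mul_sum]
    apply Finset.sum_congr rfl
    intro i _
    have he : (1 + (-1 : ℤ) ^ (2 * i)) = 2 := by rw [pow_mul]; norm_num
    have ho : (1 + (-1 : ℤ) ^ (2 * i + 1)) = 0 := by rw [pow_succ, pow_mul]; norm_num
    rw [he, ho]
    ring

theorem sum_upper_odd_binomials (k : ℕ) (hk : 0 < k) :
    ∑ m ∈ Finset.Icc (k / 2 + 1) k, ((2 * m + 1 : ℤ)) * ((2 * k + 2).choose (2 * m + 1) : ℤ) =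
      (k + 1) * (2 ^ (2 * k) - (-1) ^ k * ((2 * k).choose k : ℤ)) := by
  have step : ∀ m : ℕ, ((2 * m + 1 : ℤ)) * ((2 * k + 2).choose (2 * m + 1) : ℤ)
      = (2 * k + 2) * ((2 * k + 1).choose (2 * m) : ℤ) := by
    intro m
    have := Nat.add_one_mul_choose_eq (2 * k + 1) (2 * m)
    have h : (2 * k + 2) * (2 * k + 1).choose (2 * m)
        = (2 * k + 2).choose (2 * m + 1) * (2 * m + 1) := by
      simpa [Nat.succ_eq_add_one] using this
    have := congrArg (Nat.cast : ℕ → ℤ) h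
    push_cast at this
    linarith
  rw [Finset.sum_congr rfl (fun m _ => step m)]
  rw [← Finset.mul_sum]
  have hsplit : ∑ m ∈ range (k / 2 + 1), ((2 * k + 1).choose (2 * m) : ℤ)
      + ∑ m ∈ Finset.Icc (k / 2 + 1) k, ((2 * k + 1).choose (2 * m) : ℤ)
      = ∑ m ∈ range (k + 1), ((2 * k + 1).choose (2 * m) : ℤ) := by
    rw [Finset.range_eq_Ico, Finset.range_eq_Ico, ← Finset.Ico_add_one_right_eq_Icc]
    exact Finset.sum_Ico_consecutive _ (by omega) (by omega)
  have hfull := even_sum_full k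
  have hhalf := half_sum k
  have hc : (0:ℤ) ≤ 1 := by norm_num
  nlinarith [hsplit, hfull, hhalf]
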